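/- Let n ≥ 1, k ∈ {1, …, n}, α ∈ (0,1], p > 0, H ≥ 0, and let h : ℝ^n → ℝ be twice continuously differentiable with h(x + p·e_k) = h(x) for all x ∈ ℝ^n (periodicity with period p in the k-th coordinate, with e_k the k-th standard basis vector). Suppose that |∂_k^2 h(x + s·e_k) − ∂_k^2 h(x)| ≤ H·|s|^α for all x ∈ ℝ^n and s ∈ ℝ. Then |∂_k h(x)| ≤ p^{1+α}·H for all x ∈ ℝ^n. (Here ∂_k denotes the partial derivative in the k-th coordinate.) -/

import Mathlib

/-- The second partial derivative `∂_j ∂_k h` of `h : ℝⁿ → ℝ`, expressed via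
Fréchet derivatives applied to the standard basis vectors. -/
noncomputable def secondPartial (n : ℕ) (h : (Fin n → ℝ) → ℝ) (j k : Fin n)
    (x : Fin n → ℝ) : ℝ :=
  fderiv ℝ (fun y => fderiv ℝ h y (Pi.single k 1)) x (Pi.single j 1)

/-- Let `h : ℝⁿ → ℝ` be `C²`, periodic with period `p > 0` in the
`k`-th coordinate, and suppose the second partial `∂_k² h` satisfies the directional
Hölder estimate `|∂_k² h(x + s·e_k) − ∂_k² h(x)| ≤ H·|s|^α` for all `x, s`. Then
`|∂_k h(x)| ≤ p^{1+α}·H` for all `x`. -/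
theorem stmt_12 (n : ℕ) (hn : 1 ≤ n) (k : Fin n) (α p H : ℝ)
    (hα : 0 < α) (hα1 : α ≤ 1) (hp : 0 < p) (hH : 0 ≤ H)
    (h : (Fin n → ℝ) → ℝ) (hh : ContDiff ℝ 2 h)
    (hper : ∀ x : Fin n → ℝ, h (x + p • (Pi.single k 1 : Fin n → ℝ)) = h x)
    (hHolder : ∀ (x : Fin n → ℝ) (s : ℝ),
      |secondPartial n h k k (x + s • (Pi.single k 1 : Fin n → ℝ)) - secondPartial n h k k x| ≤
        H * |s| ^ α) :
    ∀ x : Fin n → ℝ, |fderiv ℝ h x (Pi.single k 1)| ≤ p ^ (1 + α) * H := by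
  intro x
  set e : Fin n → ℝ := Pi.single k 1 with he
  have hhd : Differentiable ℝ h := hh.differentiable (by norm_num)
  set F : (Fin n → ℝ) → ℝ := fun y => fderiv ℝ h y e with hF
  have hFc : ContDiff ℝ 1 F :=
    (ContinuousLinearMap.apply ℝ ℝ e).contDiff.comp (hh.fderiv_right (by norm_num))
  -- derivative of the curve t ↦ x + t • e
  have hc : ∀ t : ℝ, HasDerivAt (fun t : ℝ => x + t • e) e t := by
    intro t
    have := ((hasDerivAt_id t).smul_const e).const_add x
    simpa using this
  -- g and its derivatives
  have hg : ∀ t : ℝ, HasDerivAt (fun t : ℝ => h (x + t • e)) (F (x + t • e)) t := by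
    intro t
    have := (hhd (x + t • e)).hasFDerivAt.comp_hasDerivAt t (hc t)
    simpa [Function.comp_def, hF] using this
  have hg' : ∀ t : ℝ, HasDerivAt (fun t : ℝ => F (x + t • e))
      (secondPartial n h k k (x + t • e)) t := by
    intro t
    have := ((hFc.differentiable one_ne_zero) (x + t • e)).hasFDerivAt.comp_hasDerivAt t (hc t)
    simpa [Function.comp_def, secondPartial, hF, he] using this
  -- periodicity of g
  have hxper : ∀ t : ℝ, x + (t + p) • e = (x + t • e) + p • e := by
    intro t; rw [add_smul]; abel
  have hgper : ∀ t : ℝ, h (x + (t + p) • e) = h (x + t • e) := by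
    intro t; rw [hxper t]; exact hper (x + t • e)
  -- periodicity of G' = F ∘ curve
  have hG'per : ∀ t : ℝ, F (x + (t + p) • e) = F (x + t • e) := by
    intro t
    have h1 : HasDerivAt (fun s : ℝ => h (x + (s + p) • e)) (F (x + (t + p) • e)) t := by
      have := (hg (t + p)).comp t ((hasDerivAt_id t).add_const p)
      simpa [Function.comp_def] using this
    have h2 : (fun s : ℝ => h (x + (s + p) • e)) = fun s : ℝ => h (x + s • e) :=
      funext fun s => hgper s
    rw [h2] at h1
    exact h1.unique (hg t)
  -- find t₀ ∈ (0,p) with G' t₀ = 0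
  have hgc : ContinuousOn (fun t : ℝ => h (x + t • e)) (Set.Icc 0 p) :=
    fun t _ => ((hg t).continuousAt).continuousWithinAt
  obtain ⟨t₀, ht₀mem, ht₀⟩ := exists_hasDerivAt_eq_slope (fun t : ℝ => h (x + t • e))
    (fun t => F (x + t • e)) hp hgc (fun t _ => hg t)
  have hgp0 : h (x + p • e) = h (x + (0:ℝ) • e) := by
    have := hgper 0; simpa using this
  have ht₀0 : F (x + t₀ • e) = 0 := by
    rw [ht₀, hgp0]; simp
  -- find t₁ ∈ (0,p) with G'' t₁ = 0
  have hg'c : ContinuousOn (fun t : ℝ => F (x + t • e)) (Set.Icc 0 p) :=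
    fun t _ => ((hg' t).continuousAt).continuousWithinAt
  obtain ⟨t₁, ht₁mem, ht₁⟩ := exists_hasDerivAt_eq_slope (fun t : ℝ => F (x + t • e))
    (fun t => secondPartial n h k k (x + t • e)) hp hg'c (fun t _ => hg' t)
  have hG'p0 : F (x + p • e) = F (x + (0:ℝ) • e) := by
    have := hG'per 0; simpa using this
  have ht₁0 : secondPartial n h k k (x + t₁ • e) = 0 := by
    rw [ht₁, hG'p0]; simp
  -- bound on G'' on [0,p]
  have hbound : ∀ s ∈ Set.Icc (0:ℝ) p, |secondPartial n h k k (x + s • e)| ≤ H * p ^ α := by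
    intro s hs
    have h1 : x + t₁ • e + (s - t₁) • e = x + s • e := by
      rw [add_assoc, ← add_smul]; ring_nf
    have h2 := hHolder (x + t₁ • e) (s - t₁)
    rw [h1, ht₁0, sub_zero] at h2
    refine h2.trans (mul_le_mul_of_nonneg_left ?_ hH)
    have hdist : |s - t₁| ≤ p := by
      rw [abs_le]
      constructor
      · nlinarith [hs.1, hs.2, ht₁mem.1, ht₁mem.2]
      · nlinarith [hs.1, hs.2, ht₁mem.1, ht₁mem.2]
    exact Real.rpow_le_rpow (abs_nonneg _) hdist hα.le
  -- mean value inequality for G' between t₀ and 0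
  have hkey : |F (x + (0:ℝ) • e) - F (x + t₀ • e)| ≤ (H * p ^ α) * |(0:ℝ) - t₀| := by
    have := (convex_Icc (0:ℝ) p).norm_image_sub_le_of_norm_hasDerivWithin_le
      (f := fun t : ℝ => F (x + t • e))
      (f' := fun t => secondPartial n h k k (x + t • e))
      (fun t ht => (hg' t).hasDerivWithinAt)
      (fun t ht => by simpa [Real.norm_eq_abs] using hbound t ht)
      (Set.mem_Icc.mpr ⟨ht₀mem.1.le, ht₀mem.2.le⟩)
      (Set.mem_Icc.mpr ⟨le_refl 0, hp.le⟩)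
    simpa [Real.norm_eq_abs] using this
  have hfinal : |F (x + (0:ℝ) • e)| ≤ (H * p ^ α) * p := by
    rw [ht₀0, sub_zero] at hkey
    refine hkey.trans ?_
    refine mul_le_mul_of_nonneg_left ?_ (by positivity)
    rw [zero_sub, abs_neg, abs_of_pos ht₀mem.1]
    exact ht₀mem.2.le
  have hx0 : x + (0:ℝ) • e = x := by simp
  rw [hx0] at hfinal
  have hrw : p ^ (1 + α) * H = H * p ^ α * p := by
    rw [Real.rpow_add hp, Real.rpow_one]; ring
  rw [hrw]
  exact hfinal
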